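/- Let V be a finite-dimensional ℚ-vector space, n ≥ 1, and let B : V × V → ℂ be a symmetric ℚ-bilinear map with values in ℂ. Assume that for all α₁, …, α_{2n} ∈ V the polarized product Σ_{σ ∈ S_{2n}} B(α_{σ(1)}, α_{σ(2)}) ⋯ B(α_{σ(2n−1)}, α_{σ(2n)}) is a rational number, and that there exists λ ∈ V with B(λ, λ) ≠ 0. Then there exists a nonzero complex number t such that t · B(α, β) ∈ ℚ for all α, β ∈ V. -/

import Mathlib

open Polynomial

lemma ratCoeff (p : ℂ[X]) (h : ∀ q : ℚ, p.eval (q : ℂ) ∈ Set.range ((↑) : ℚ → ℂ)) (k : ℕ) :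
    p.coeff k ∈ Set.range ((↑) : ℚ → ℂ) := by
  classical
  choose f hf using h
  set N := p.natDegree + 1 with hN
  set s : Finset ℕ := Finset.range N with hs
  have hinjQ : Set.InjOn (fun i : ℕ => (i : ℚ)) s := fun a _ b _ hab => Nat.cast_injective hab
  have hcard : s.card = N := Finset.card_range N
  have hdegp : p.degree < (s.card : WithBot ℕ) := by
    rw [hcard]
    exact lt_of_le_of_lt degree_le_natDegree (by exact_mod_cast Nat.lt_succ_self _)
  set Q : ℚ[X] := Lagrange.interpolate s (fun i : ℕ => (i : ℚ)) (fun i => f i) with hQ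
  have hmapdeg : (Q.map (algebraMap ℚ ℂ)).degree < (s.card : WithBot ℕ) := by
    rw [degree_map_eq_of_injective (algebraMap ℚ ℂ).injective]
    exact Lagrange.degree_interpolate_lt _ hinjQ
  have hmapeval : ∀ i ∈ s, (Q.map (algebraMap ℚ ℂ)).eval ((fun i : ℕ => (i : ℂ)) i)
      = (fun i : ℕ => p.eval ((i : ℕ) : ℂ)) i := by
    intro i hi
    have h1 : ((i : ℕ) : ℂ) = algebraMap ℚ ℂ ((i : ℕ) : ℚ) := by
      exact (map_natCast (algebraMap ℚ ℂ) i).symm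
    simp only [h1, eval_map, eval₂_at_apply]
    have h2 : Q.eval ((i : ℕ) : ℚ) = f i := Lagrange.eval_interpolate_at_node _ hinjQ hi
    rw [h2]
    have := hf (i : ℚ)
    show ((f (i:ℚ) : ℚ) : ℂ) = eval (((i:ℚ) : ℚ) : ℂ) p
    rw [this]
  have hinjC : Set.InjOn (fun i : ℕ => (i : ℂ)) s := fun a _ b _ hab => Nat.cast_injective hab
  have hpeq : p = Lagrange.interpolate s (fun i : ℕ => (i : ℂ)) (fun i => p.eval ((i : ℕ) : ℂ)) :=
    Lagrange.eq_interpolate hinjC hdegp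
  have hQeq : Q.map (algebraMap ℚ ℂ)
      = Lagrange.interpolate s (fun i : ℕ => (i : ℂ)) (fun i => p.eval ((i : ℕ) : ℂ)) :=
    Lagrange.eq_interpolate_of_eval_eq _ hinjC hmapdeg hmapeval
  have : p = Q.map (algebraMap ℚ ℂ) := hpeq.trans hQeq.symm
  rw [this, coeff_map]
  exact ⟨Q.coeff k, (eq_ratCast (algebraMap ℚ ℂ) _).symm⟩

/-- Rationality step of the Fujiki formula: if the polarized `2n`-fold products of a
symmetric ℚ-bilinear ℂ-valued form are always rational and the form is nonzero on
some vector, then some nonzero complex multiple of the form takes rational values. -/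
theorem stmt_6 {V : Type*} [AddCommGroup V] [Module ℚ V] [FiniteDimensional ℚ V]
    (n : ℕ) (hn : 1 ≤ n) (B : V →ₗ[ℚ] V →ₗ[ℚ] ℂ) (hBsymm : ∀ x y, B x y = B y x)
    (hrat : ∀ v : Fin (2 * n) → V,
      (∑ σ : Equiv.Perm (Fin (2 * n)), ∏ i : Fin n,
        B (v (σ ⟨2 * i.1, by have := i.2; omega⟩))
          (v (σ ⟨2 * i.1 + 1, by have := i.2; omega⟩)))
        ∈ Set.range ((↑) : ℚ → ℂ))
    (hlam : ∃ l : V, B l l ≠ 0) :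
    ∃ t : ℂ, t ≠ 0 ∧ ∀ α β : V, t * B α β ∈ Set.range ((↑) : ℚ → ℂ) := by
  classical
  obtain ⟨l, hl⟩ := hlam
  set S : Subfield ℂ := (Rat.castHom ℂ).fieldRange with hS
  have hSr : ∀ z : ℂ, z ∈ Set.range ((↑) : ℚ → ℂ) ↔ z ∈ S := by
    intro z
    constructor
    · rintro ⟨q, hq⟩; exact ⟨q, hq⟩
    · rintro ⟨q, hq⟩; exact ⟨q, hq⟩
  have hnat : ∀ k : ℕ, (k : ℂ) ∈ S := fun k => ⟨(k : ℚ), by simp⟩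
  set c : ℂ := B l l with hc
  -- Step A : (B x x)^n ∈ S for all x
  have hA : ∀ x : V, (B x x) ^ n ∈ S := by
    intro x
    have hr := (hSr _).mp (hrat (fun _ => x))
    have h1 : (∑ _σ : Equiv.Perm (Fin (2 * n)), ∏ _i : Fin n, B x x)
        = (Fintype.card (Equiv.Perm (Fin (2 * n))) : ℂ) * (B x x) ^ n := by
      simp [Finset.prod_const, Finset.sum_const, Finset.card_univ, nsmul_eq_mul]
    rw [h1] at hr
    have hcard : ((Fintype.card (Equiv.Perm (Fin (2 * n))) : ℂ)) ≠ 0 := by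
      exact_mod_cast Fintype.card_ne_zero
    have := S.div_mem hr (hnat (Fintype.card (Equiv.Perm (Fin (2 * n)))))
    rwa [mul_div_cancel_left₀ _ hcard] at this
  -- Key step : c^(n-1) * B x x ∈ S for all x
  have hkey : ∀ x : V, c ^ (n - 1) * B x x ∈ S := by
    intro x
    rcases Nat.lt_or_ge n 2 with h2 | h2
    · -- n = 1
      have hn1 : n = 1 := by omega
      subst hn1
      simpa using hA x
    · obtain ⟨m, rfl⟩ : ∃ m, n = m + 2 := ⟨n - 2, by omega⟩
      have hm1 : m + 2 - 1 = m + 1 := by omega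
      have hm2 : m + 2 - 2 = m := by omega
      rw [hm1]
      set a : ℂ := B x x with ha
      set b : ℂ := B x l with hb
      set s : ℂ[X] := C c + C (2 * b) * X + C a * X ^ 2 with hsdef
      set p : ℂ[X] := s ^ (m + 2) with hpdef
      have heval : ∀ q : ℚ, p.eval (q : ℂ) ∈ Set.range ((↑) : ℚ → ℂ) := by
        intro q
        have h2' : B (l + q • x) (l + q • x) = c + (q : ℂ) * (2 * b) + (q : ℂ) ^ 2 * a := by
          simp only [map_add, map_smul, LinearMap.add_apply, LinearMap.smul_apply,
            Rat.smul_def, hBsymm l x, ← hc, ← ha, ← hb]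
          ring
        have h1 : p.eval (q : ℂ) = (B (l + q • x) (l + q • x)) ^ (m + 2) := by
          rw [h2']
          simp [hpdef, hsdef]
          ring
        rw [h1, hSr]
        exact hA _
      have hc1 : p.coeff 1 ∈ S := (hSr _).mp (ratCoeff p heval 1)
      have hc2 : p.coeff 2 ∈ S := (hSr _).mp (ratCoeff p heval 2)
      -- derivative computations
      have hDs : derivative s = C (2 * b) + C (2 * a) * X := by
        simp [hsdef, C_mul, C_ofNat]
        ring
      have hp1 : p.coeff 1 = ((m + 2 : ℕ) : ℂ) * c ^ (m + 1) * (2 * b) := by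
        have h1 : p.coeff 1 = (derivative p).eval 0 := by
          rw [← coeff_zero_eq_eval_zero, coeff_derivative]
          simp
        rw [h1, hpdef, derivative_pow]
        simp [hDs, hsdef, hm1]
      have hp2 : 2 * p.coeff 2
          = ((m + 2 : ℕ) : ℂ) * (((m + 1 : ℕ) : ℂ) * c ^ m * (2 * b) ^ 2
            + c ^ (m + 1) * (2 * a)) := by
        have h1 : (derivative (derivative p)).eval 0 = 2 * p.coeff 2 := by
          rw [← coeff_zero_eq_eval_zero, coeff_derivative, coeff_derivative]
          ring
        rw [← h1, hpdef, derivative_pow, derivative_mul, derivative_mul, derivative_C,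
          derivative_pow, hDs]
        simp [hsdef, hm1, show m + 1 - 1 = m from rfl]
        ring
      have hX : (↑(m + 2) : ℂ) * (((m + 1 : ℕ) : ℂ) * c ^ m * (2 * b) ^ 2
          + c ^ (m + 1) * (2 * a)) ∈ S := by
        rw [← hp2]
        exact S.mul_mem (hnat 2) hc2
      have hY : (↑(m + 2) : ℂ) * c ^ (m + 1) * (2 * b) ∈ S := by rw [← hp1]; exact hc1
      have hZ : c ^ (m + 2) ∈ S := hA l
      have hcne : c ≠ 0 := hl
      have hn2 : ((m + 2 : ℕ) : ℂ) ≠ 0 := by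
        exact_mod_cast (Nat.succ_ne_zero (m + 1))
      have hcn : c ^ (m + 2) ≠ 0 := pow_ne_zero _ hcne
      have hYZ : ((↑(m + 2) : ℂ) * c ^ (m + 1) * (2 * b)) ^ 2 / c ^ (m + 2)
          = ((m + 2 : ℕ) : ℂ) ^ 2 * 4 * (c ^ m * b ^ 2) := by
        rw [div_eq_iff hcn]
        ring
      have hcb : c ^ m * b ^ 2 ∈ S := by
        have h5 : c ^ m * b ^ 2
            = (((↑(m + 2) : ℂ) * c ^ (m + 1) * (2 * b)) ^ 2 / c ^ (m + 2))
              / (((m + 2 : ℕ) : ℂ) ^ 2 * 4) := by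
          rw [hYZ, mul_div_cancel_left₀ _ (mul_ne_zero (pow_ne_zero 2 hn2) (by norm_num))]
        rw [h5]
        exact S.div_mem (S.div_mem (S.pow_mem hY 2) hZ)
          (S.mul_mem (S.pow_mem (hnat (m + 2)) 2) (hnat 4))
      have hid : c ^ (m + 1) * a
          = ((↑(m + 2) : ℂ) * (((m + 1 : ℕ) : ℂ) * c ^ m * (2 * b) ^ 2 + c ^ (m + 1) * (2 * a))
              / (↑(m + 2) : ℂ)
            - 4 * ((m + 1 : ℕ) : ℂ) * (c ^ m * b ^ 2)) / 2 := by
        have hn2' : ((m : ℂ) + 2) ≠ 0 := by push_cast at hn2; exact hn2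
        push_cast
        field_simp
        ring
      rw [hid]
      exact S.div_mem (S.sub_mem (S.div_mem hX (hnat (m + 2)))
        (S.mul_mem (S.mul_mem ⟨4, by norm_num⟩ (hnat (m + 1))) hcb)) (hnat 2)
  -- polarization
  refine ⟨c ^ (n - 1), pow_ne_zero _ hl, ?_⟩
  intro α β
  rw [hSr]
  have h1 := hkey (α + β)
  have h2 := hkey α
  have h3 := hkey β
  have hexp : B (α + β) (α + β) = B α α + 2 * B α β + B β β := by
    simp only [map_add, LinearMap.add_apply, hBsymm β α]
    ring
  rw [hexp] at h1
  have h4 : c ^ (n - 1) * B α β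
      = (c ^ (n - 1) * (B α α + 2 * B α β + B β β) - c ^ (n - 1) * B α α
        - c ^ (n - 1) * B β β) / 2 := by ring
  rw [h4]
  exact S.div_mem (S.sub_mem (S.sub_mem h1 h2) h3) (hnat 2)
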